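/- Let f be continuous and 2π-periodic, F = f ∘ θ_a^{-1}. Then ‖F‖_∞ = ‖f‖_∞, and for 0 < p < ∞, ‖F‖_p ≤ ((1+|a|)/(1-|a|))^{1/p} ‖f‖_p, where ‖g‖_p = ((1/2π)∫_𝕋 |g|^p)^{1/p}. -/

import Mathlib

open Real MeasureTheory

theorem norms_of_composition_with_inverse_phase
    (a : ℂ) (ha : ‖a‖ < 1)
    (θ : ℝ → ℝ) (hθc : Continuous θ) (hθm : StrictMono θ)
    (hper : ∀ t : ℝ, θ (t + 2 * π) = θ t + 2 * π)
    (hθd : Differentiable ℝ θ)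
    (hbounds : ∀ t : ℝ, (1 - ‖a‖) / (1 + ‖a‖) ≤ deriv θ t ∧
      deriv θ t ≤ (1 + ‖a‖) / (1 - ‖a‖))
    (θinv : ℝ → ℝ) (hinv₁ : ∀ t, θinv (θ t) = t) (hinv₂ : ∀ t, θ (θinv t) = t)
    (f : ℝ → ℂ) (hf : Continuous f) (hfper : Function.Periodic f (2 * π))
    (p : ℝ) (hp : 0 < p) :
    (⨆ x : ℝ, ‖f (θinv x)‖) = (⨆ x : ℝ, ‖f x‖) ∧
      ((1 / (2 * π)) * ∫ t in (-π)..π, ‖f (θinv t)‖ ^ p) ^ (1 / p) ≤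
        ((1 + ‖a‖) / (1 - ‖a‖)) ^ (1 / p) *
          ((1 / (2 * π)) * ∫ t in (-π)..π, ‖f t‖ ^ p) ^ (1 / p) := by
  have ha0 : (0:ℝ) ≤ ‖a‖ := norm_nonneg a
  have h1a : (0:ℝ) < 1 - ‖a‖ := by linarith
  have h1a' : (0:ℝ) < 1 + ‖a‖ := by linarith
  set M : ℝ := (1 + ‖a‖) / (1 - ‖a‖) with hM
  have hMpos : 0 < M := div_pos h1a' h1a
  have hmpos : 0 < (1 - ‖a‖) / (1 + ‖a‖) := div_pos h1a h1a'
  have hsurj : Function.Surjective θinv := fun t => ⟨θ t, hinv₁ t⟩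
  constructor
  · exact hsurj.iSup_comp (fun x => ‖f x‖)
  -- the Lᵖ estimate
  set h : ℝ → ℝ := fun x => ‖f x‖ ^ p with hh
  have hhcont : Continuous h := (hf.norm).rpow_const (fun x => Or.inr hp.le)
  have hhnn : ∀ x, 0 ≤ h x := fun x => Real.rpow_nonneg (norm_nonneg _) p
  have hhper : Function.Periodic h (2 * π) := fun x => by simp [hh, hfper x]
  set a' : ℝ := θinv (-π) with ha'
  set b' : ℝ := θinv π with hb'
  have hb'a' : b' = a' + 2 * π := by
    apply hθm.injective
    rw [hinv₂, hper, hinv₂]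
    ring
  have hab' : a' < b' := by rw [hb'a']; linarith [Real.pi_pos]
  -- image of the interval
  have himg : θ '' Set.Ioc a' b' = Set.Ioc (-π) π := by
    ext x
    constructor
    · rintro ⟨y, ⟨h1, h2⟩, rfl⟩
      exact ⟨by simpa [ha', hinv₂] using hθm h1, by simpa [hb', hinv₂] using hθm.monotone h2⟩
    · rintro ⟨h1, h2⟩
      refine ⟨θinv x, ⟨?_, ?_⟩, hinv₂ x⟩
      · exact hθm.lt_iff_lt.mp (by simpa [ha', hinv₂] using h1)
      · exact hθm.le_iff_le.mp (by simpa [hb', hinv₂] using h2)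
  have hpi : (-π : ℝ) ≤ π := by linarith [Real.pi_pos]
  -- change of variables
  have hcv : (∫ t in (-π)..π, ‖f (θinv t)‖ ^ p) =
      ∫ x in Set.Ioc a' b', |deriv θ x| * h x := by
    rw [intervalIntegral.integral_of_le hpi, ← himg,
      integral_image_eq_integral_abs_deriv_smul measurableSet_Ioc
        (fun x _ => (hθd x).hasDerivAt.hasDerivWithinAt) (hθm.injective.injOn) _]
    refine setIntegral_congr_fun measurableSet_Ioc fun x _ => ?_
    simp [hinv₁, hh, smul_eq_mul]
  have hderiv_nn : ∀ x, 0 ≤ deriv θ x := fun x => le_trans hmpos.le (hbounds x).1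
  -- bound by M
  have hIntM : IntegrableOn (fun x => M * h x) (Set.Ioc a' b') volume :=
    ((continuous_const.mul hhcont)).integrableOn_Ioc
  have hIntL : IntegrableOn (fun x => |deriv θ x| * h x) (Set.Ioc a' b') volume := by
    refine Integrable.mono' hIntM ?_ ?_
    · exact (((measurable_deriv θ).abs.mul hhcont.measurable).aestronglyMeasurable)
    · filter_upwards with x
      rw [Real.norm_eq_abs, abs_mul, abs_abs, abs_of_nonneg (hhnn x),
        abs_of_nonneg (hderiv_nn x)]
      exact mul_le_mul_of_nonneg_right (hbounds x).2 (hhnn x)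
  have hle : (∫ x in Set.Ioc a' b', |deriv θ x| * h x) ≤
      ∫ x in Set.Ioc a' b', M * h x := by
    refine setIntegral_mono_on hIntL hIntM measurableSet_Ioc fun x _ => ?_
    rw [abs_of_nonneg (hderiv_nn x)]
    exact mul_le_mul_of_nonneg_right (hbounds x).2 (hhnn x)
  -- replace interval by [-π, π] via periodicity
  have hper_int : (∫ x in Set.Ioc a' b', h x) = ∫ t in (-π)..π, h t := by
    rw [← intervalIntegral.integral_of_le hab'.le, hb'a',
      hhper.intervalIntegral_add_eq a' (-π), show -π + 2 * π = π by ring]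
  have hI2nn : 0 ≤ ∫ t in (-π)..π, h t :=
    intervalIntegral.integral_nonneg hpi fun x _ => hhnn x
  have key : (∫ t in (-π)..π, ‖f (θinv t)‖ ^ p) ≤ M * ∫ t in (-π)..π, h t := by
    rw [hcv]
    calc (∫ x in Set.Ioc a' b', |deriv θ x| * h x) ≤ ∫ x in Set.Ioc a' b', M * h x := hle
      _ = M * ∫ x in Set.Ioc a' b', h x := by rw [integral_const_mul]
      _ = M * ∫ t in (-π)..π, h t := by rw [hper_int]
  have hc : (0:ℝ) < 1 / (2 * π) := by positivity
  have hLnn : 0 ≤ (1 / (2 * π)) * ∫ t in (-π)..π, ‖f (θinv t)‖ ^ p := by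
    apply mul_nonneg hc.le
    exact intervalIntegral.integral_nonneg hpi fun x _ => Real.rpow_nonneg (norm_nonneg _) p
  have hstep : (1 / (2 * π)) * (∫ t in (-π)..π, ‖f (θinv t)‖ ^ p) ≤
      M * ((1 / (2 * π)) * ∫ t in (-π)..π, h t) := by
    calc (1 / (2 * π)) * (∫ t in (-π)..π, ‖f (θinv t)‖ ^ p)
        ≤ (1 / (2 * π)) * (M * ∫ t in (-π)..π, h t) :=
          mul_le_mul_of_nonneg_left key hc.le
      _ = M * ((1 / (2 * π)) * ∫ t in (-π)..π, h t) := by ring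
  calc ((1 / (2 * π)) * ∫ t in (-π)..π, ‖f (θinv t)‖ ^ p) ^ (1 / p)
      ≤ (M * ((1 / (2 * π)) * ∫ t in (-π)..π, h t)) ^ (1 / p) :=
        Real.rpow_le_rpow hLnn hstep (by positivity)
    _ = M ^ (1 / p) * ((1 / (2 * π)) * ∫ t in (-π)..π, h t) ^ (1 / p) :=
        Real.mul_rpow hMpos.le (mul_nonneg hc.le hI2nn)
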